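/- For all integers j > i ≥ k ≥ 1, C_{i−1}·h_{j,k} ≥ C_{j−1}·h_{i,k}, where h_{i,k} = (k/(2i−k))·binom(2i−k, i) and C_n is the n-th Catalan number. -/

import Mathlib

/-- The `n`-th Catalan number as a rational, `C n = binom(2n, n)/(n+1)`. -/
noncomputable def catalanQ (n : ℕ) : ℚ := ((2 * n).choose n : ℚ) / (n + 1)

/-- `hQ i k = (k/(2i-k)) * binom(2i-k, i)`, the number of 132-avoiding permutations of
length `i` with exactly `k` skew indecomposable components. -/
noncomputable def hQ (i k : ℕ) : ℚ := (k : ℚ) / (2 * i - k) * ((2 * i - k).choose i : ℚ)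

lemma ratio_aux (m r : ℕ) :
    (m+2).choose (r+1) * ((r+1) * (m+1-r)) = (m+1)*(m+2)*(m.choose r) := by
  have h1 := Nat.add_one_mul_choose_eq (m+1) r
  have h2 := Nat.choose_mul_succ_eq m r
  calc (m+2).choose (r+1) * ((r+1) * (m+1-r))
      = ((m+2).choose (r+1) * (r+1)) * (m+1-r) := by ring
    _ = ((m+2) * (m+1).choose r) * (m+1-r) := by rw [← h1]
    _ = (m+2) * ((m+1).choose r * (m+1-r)) := by ring
    _ = (m+2) * (m.choose r * (m+1)) := by rw [← h2]
    _ = (m+1)*(m+2)*(m.choose r) := by ring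

lemma frac_helper (B C kq d1 d2 : ℚ) :
    B/d1 * (kq/d2 * C) = (B*(kq*C))/(d1*d2) := by
  rw [div_mul_eq_mul_div kq d2 C, div_mul_div_comm]

set_option maxHeartbeats 1000000 in
lemma step (n k : ℕ) (hk : 1 ≤ k) (hkn : k ≤ n + 1) :
    catalanQ (n+1) * hQ (n+1) k ≤ catalanQ n * hQ (n+2) k := by
  have hb := ratio_aux (2*n) n
  have hd := ratio_aux (2*(n+1)-k) (n+1)
  rw [show (2*n:ℕ)+2 = 2*(n+1) from by ring, show (2*n:ℕ)+1-n = n+1 from by omega] at hb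
  rw [show (2*(n+1)-k:ℕ)+2 = 2*(n+2)-k from by omega,
      show (2*(n+1)-k:ℕ)+1-(n+1) = n+2-k from by omega,
      show (n:ℕ)+1+1 = n+2 from by omega] at hd
  have hc2 : ((2*(n+1)-k : ℕ) : ℚ) = 2*(n:ℚ)+2-k := by
    rw [Nat.cast_sub (by omega)]; push_cast; ring
  have hd2 : ((2*(n+2)-k : ℕ) : ℚ) = 2*(n:ℚ)+4-k := by
    rw [Nat.cast_sub (by omega)]; push_cast; ring
  have hx2 : ((n+2-k : ℕ) : ℚ) = (n:ℚ)+2-k := by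
    rw [Nat.cast_sub (by omega)]; push_cast; ring
  have Hb : ((2*(n+1)).choose (n+1) : ℚ) * (((n:ℚ)+1)*((n:ℚ)+1))
      = (2*(n:ℚ)+1)*(2*(n:ℚ)+2)*((2*n).choose n : ℚ) := by
    have := congrArg (Nat.cast : ℕ → ℚ) hb
    push_cast at this
    linarith [this]
  have Hd : ((2*(n+2)-k).choose (n+2) : ℚ) * (((n:ℚ)+2)*((n:ℚ)+2-k))
      = (2*(n:ℚ)+3-k)*(2*(n:ℚ)+4-k)*((2*(n+1)-k).choose (n+1) : ℚ) := by
    have := congrArg (Nat.cast : ℕ → ℚ) hd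
    push_cast [hc2, hd2, hx2] at this
    linarith [this]
  have hk1 : (1:ℚ) ≤ k := by exact_mod_cast hk
  have hkn' : (k:ℚ) ≤ n+1 := by exact_mod_cast hkn
  have ha_pos : (0:ℚ) < ((2*n).choose n : ℚ) := by
    exact_mod_cast Nat.choose_pos (by omega)
  have hc_pos : (0:ℚ) < ((2*(n+1)-k).choose (n+1) : ℚ) := by
    exact_mod_cast Nat.choose_pos (by omega)
  have hkk : (0:ℚ) ≤ ((k:ℚ)-1)*((k:ℚ)-2) := by
    rcases Nat.lt_or_ge k 2 with h | h
    · interval_cases k <;> norm_num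
    · have : (2:ℚ) ≤ k := by exact_mod_cast h
      nlinarith
  have hne1 : ((n:ℚ)+1+1) ≠ 0 := by positivity
  have hne1' : ((n:ℚ)+1) ≠ 0 := by positivity
  have hpos2 : (0:ℚ) < 2*((n:ℚ)+1)-k := by linarith
  have hpos3 : (0:ℚ) < 2*((n:ℚ)+2)-k := by linarith
  have hne2 : (2*((n:ℚ)+1)-k) ≠ 0 := ne_of_gt hpos2
  have hne3 : (2*((n:ℚ)+2)-k) ≠ 0 := ne_of_gt hpos3
  have hA : catalanQ (n+1) * hQ (n+1) k
      = (((2*(n+1)).choose (n+1) : ℚ) * (k * ((2*(n+1)-k).choose (n+1) : ℚ)))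
        / (((n:ℚ)+2) * (2*(n:ℚ)+2-k)) := by
    unfold catalanQ hQ
    push_cast
    rw [frac_helper]
    congr 1
    ring
  have hB : catalanQ n * hQ (n+2) k
      = (((2*n).choose n : ℚ) * (k * ((2*(n+2)-k).choose (n+2) : ℚ)))
        / (((n:ℚ)+1) * (2*(n:ℚ)+4-k)) := by
    unfold catalanQ hQ
    push_cast
    rw [frac_helper]
    congr 1
    ring
  have core : 2*(2*(n:ℚ)+1)*((n:ℚ)+2-k) ≤ (2*(n:ℚ)+3-k)*(2*(n:ℚ)+2-k) := by
    nlinarith [hkk]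
  have dpos1 : (0:ℚ) < ((n:ℚ)+2)*(2*(n:ℚ)+2-k) := by nlinarith
  have dpos2 : (0:ℚ) < ((n:ℚ)+1)*(2*(n:ℚ)+4-k) := by nlinarith
  rw [hA, hB, div_le_div_iff₀ dpos1 dpos2]
  refine le_of_mul_le_mul_right ?_
    (show (0:ℚ) < ((n:ℚ)+1)*((n:ℚ)+2)*((n:ℚ)+2-k) by nlinarith)
  have Qnn : (0:ℚ) ≤ ((2*n).choose n : ℚ) * k * ((2*(n+1)-k).choose (n+1) : ℚ)
      * (2*(n:ℚ)+4-k) * ((n:ℚ)+2) * ((n:ℚ)+1) := by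
    have : (0:ℚ) ≤ k := by linarith
    have h24 : (0:ℚ) ≤ 2*(n:ℚ)+4-k := by linarith
    positivity
  have m1 := mul_le_mul_of_nonneg_right core Qnn
  calc ((2*(n+1)).choose (n+1) : ℚ) * ((k:ℚ) * ((2*(n+1)-k).choose (n+1) : ℚ))
        * (((n:ℚ)+1) * (2*(n:ℚ)+4-k)) * (((n:ℚ)+1)*((n:ℚ)+2)*((n:ℚ)+2-k))
      = (((2*(n+1)).choose (n+1) : ℚ) * (((n:ℚ)+1)*((n:ℚ)+1)))
        * ((k:ℚ) * ((2*(n+1)-k).choose (n+1) : ℚ) * (2*(n:ℚ)+4-k) * ((n:ℚ)+2) * ((n:ℚ)+2-k)) := by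
        ring
    _ = ((2*(n:ℚ)+1)*(2*(n:ℚ)+2)*((2*n).choose n : ℚ))
        * ((k:ℚ) * ((2*(n+1)-k).choose (n+1) : ℚ) * (2*(n:ℚ)+4-k) * ((n:ℚ)+2) * ((n:ℚ)+2-k)) := by
        rw [Hb]
    _ ≤ ((2*(n:ℚ)+3-k)*(2*(n:ℚ)+2-k))
        * (((2*n).choose n : ℚ) * k * ((2*(n+1)-k).choose (n+1) : ℚ)
            * (2*(n:ℚ)+4-k) * ((n:ℚ)+2) * ((n:ℚ)+1)) := by
        nlinarith [m1]
    _ = ((2*(n:ℚ)+3-k)*(2*(n:ℚ)+4-k)*((2*(n+1)-k).choose (n+1) : ℚ))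
        * (((2*n).choose n : ℚ) * k * (2*(n:ℚ)+2-k) * ((n:ℚ)+1) * ((n:ℚ)+2)) := by
        ring
    _ = (((2*(n+2)-k).choose (n+2) : ℚ) * (((n:ℚ)+2)*((n:ℚ)+2-k)))
        * (((2*n).choose n : ℚ) * k * (2*(n:ℚ)+2-k) * ((n:ℚ)+1) * ((n:ℚ)+2)) := by
        rw [Hd]
    _ = ((2*n).choose n : ℚ) * ((k:ℚ) * ((2*(n+2)-k).choose (n+2) : ℚ))
        * (((n:ℚ)+2) * (2*(n:ℚ)+2-k)) * (((n:ℚ)+1)*((n:ℚ)+2)*((n:ℚ)+2-k)) := by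
        ring


lemma hQ_pos (i k : ℕ) (hk : 1 ≤ k) (hki : k ≤ i) : 0 < hQ i k := by
  unfold hQ
  have h1 : (1:ℚ) ≤ k := by exact_mod_cast hk
  have h2 : (k:ℚ) ≤ i := by exact_mod_cast hki
  have h3 : (0:ℚ) < 2 * (i:ℚ) - k := by linarith
  have h4 : (0:ℚ) < ((2*i-k).choose i : ℚ) := by
    exact_mod_cast Nat.choose_pos (by omega)
  have h0 : (0:ℚ) < k := by linarith
  positivity

lemma catalanQ_pos (n : ℕ) : 0 < catalanQ n := by
  unfold catalanQ
  have h1 : (0:ℚ) < ((2*n).choose n : ℚ) := by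
    exact_mod_cast Nat.choose_pos (by omega)
  positivity

theorem stmt_12 (i j k : ℕ) (hk : 1 ≤ k) (hki : k ≤ i) (hij : i < j) :
    catalanQ (j - 1) * hQ i k ≤ catalanQ (i - 1) * hQ j k := by
  induction j with
  | zero => omega
  | succ m ih =>
    rcases Nat.lt_or_ge i m with him | him
    · have IH := ih him
      obtain ⟨p, rfl⟩ : ∃ p, m = p + 1 := ⟨m - 1, by omega⟩
      have hst := step p k hk (by omega)
      have hpos := hQ_pos (p+1) k hk (by omega)
      have hpos2 := hQ_pos (p+2) k hk (by omega)
      have hposi := hQ_pos i k hk hki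
      simp only [Nat.add_sub_cancel] at IH ⊢
      have key : catalanQ (p+1) * hQ i k * hQ (p+1) k
          ≤ catalanQ (i-1) * hQ (p+1+1) k * hQ (p+1) k := by
        calc catalanQ (p+1) * hQ i k * hQ (p+1) k
            = (catalanQ (p+1) * hQ (p+1) k) * hQ i k := by ring
          _ ≤ (catalanQ p * hQ (p+2) k) * hQ i k :=
              mul_le_mul_of_nonneg_right hst hposi.le
          _ = (catalanQ p * hQ i k) * hQ (p+2) k := by ring
          _ ≤ (catalanQ (i-1) * hQ (p+1) k) * hQ (p+2) k :=
              mul_le_mul_of_nonneg_right IH hpos2.le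
          _ = catalanQ (i-1) * hQ (p+1+1) k * hQ (p+1) k := by ring_nf
      exact le_of_mul_le_mul_right key hpos
    · have : m = i := by omega
      subst this
      obtain ⟨p, rfl⟩ : ∃ p, m = p + 1 := ⟨m - 1, by omega⟩
      simpa using step p k hk (by omega)
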